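/- Let m >= 0 be an integer. For every n >= 1, the coefficient of q^n in the formal power series sum_{k>=1} (-1)^k q^{k(3k+1)+2mk}/(1-q^{2k}) equals #{ (d1,d2) in N^2 : d1*d2 = n, d1 odd, d1 - 3*d2 >= 2m+1 } - #{ (d1,d2) in N^2 : d1*d2 = n, d1 odd, d2 - 3*d1 >= 2m+1 }. -/

import Mathlib

/-- The geometric series `1/(1-q^k) = ∑_{j ≥ 0} q^{k·j}` as a formal power series over `ℤ`:
its coefficient at `q^n` is `1` exactly when `k ∣ n`. -/
def geomSer (k : ℕ) : PowerSeries ℤ := PowerSeries.mk fun n => if k ∣ n then 1 else 0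

/-- The formal power series `∑_{k ≥ 1} (-1)^k q^{k(3k+1)+2mk}/(1-q^{2k})`.
For a fixed `n`, only the (finitely many) summands with `1 ≤ k ≤ n` can contribute to the
coefficient of `q^n` (for `k > n` the lowest exponent `k(3k+1)+2mk` exceeds `n`), so the
coefficient of `q^n` of the infinite sum is the corresponding finite sum of coefficients. -/
noncomputable def seriesA (m : ℕ) : PowerSeries ℤ :=
  PowerSeries.mk fun n => ∑ k ∈ Finset.Icc 1 n,
    (PowerSeries.coeff (R := ℤ) n)
      (PowerSeries.C (R := ℤ) ((-1) ^ k) * PowerSeries.X ^ (k * (3 * k + 1) + 2 * m * k) *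
        geomSer (2 * k))

/-- Coefficient of a single summand. -/
lemma coeff_term (m n k : ℕ) :
    (PowerSeries.coeff (R := ℤ) n)
      (PowerSeries.C (R := ℤ) ((-1) ^ k) * PowerSeries.X ^ (k * (3 * k + 1) + 2 * m * k) *
        geomSer (2 * k)) =
    (-1) ^ k * (if k * (3 * k + 1) + 2 * m * k ≤ n ∧
        2 * k ∣ n - (k * (3 * k + 1) + 2 * m * k) then 1 else 0) := by
  set e := k * (3 * k + 1) + 2 * m * k with he
  rw [mul_assoc, PowerSeries.coeff_C_mul]
  congr 1
  rw [mul_comm, PowerSeries.coeff_mul_X_pow']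
  by_cases h : e ≤ n
  · simp only [h, if_true, true_and, geomSer, PowerSeries.coeff_mk]
  · simp [h]

/-- Arithmetic characterization of when a summand contributes. -/
lemma cond_iff (m n k : ℕ) (hk : 1 ≤ k) :
    (k * (3 * k + 1) + 2 * m * k ≤ n ∧ 2 * k ∣ n - (k * (3 * k + 1) + 2 * m * k)) ↔
    (k ∣ n ∧ 3 * k + 2 * m + 1 ≤ n / k ∧ (n / k + k) % 2 = 1) := by
  have he : k * (3 * k + 1) + 2 * m * k = k * (3 * k + 2 * m + 1) := by ring
  constructor
  · rintro ⟨h1, h2⟩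
    have hkdvd : k ∣ n := by
      have h3 : k ∣ n - (k * (3 * k + 1) + 2 * m * k) :=
        dvd_trans (dvd_mul_left k 2) h2
      have h4 : k ∣ k * (3 * k + 1) + 2 * m * k := by
        rw [he]; exact Dvd.intro _ rfl
      have h5 := dvd_add h3 h4
      rwa [Nat.sub_add_cancel h1] at h5
    obtain ⟨l, hl⟩ := hkdvd
    have hdiv : n / k = l := by rw [hl, Nat.mul_div_cancel_left _ hk]
    have hle : 3 * k + 2 * m + 1 ≤ l := by
      rw [he, hl] at h1
      exact Nat.le_of_mul_le_mul_left h1 hk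
    obtain ⟨t, ht⟩ := h2
    rw [he, hl, ← Nat.mul_sub] at ht
    have ht' : k * (l - (3 * k + 2 * m + 1)) = k * (2 * t) := by
      rw [ht]; ring
    have ht2 : l - (3 * k + 2 * m + 1) = 2 * t :=
      Nat.eq_of_mul_eq_mul_left hk ht'
    exact ⟨⟨l, hl⟩, by rw [hdiv]; exact hle, by rw [hdiv]; omega⟩
  · rintro ⟨hkdvd, hle, hpar⟩
    obtain ⟨l, hl⟩ := hkdvd
    have hdiv : n / k = l := by rw [hl, Nat.mul_div_cancel_left _ hk]
    rw [hdiv] at hle hpar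
    have h1 : k * (3 * k + 1) + 2 * m * k ≤ n := by
      rw [he, hl]; exact Nat.mul_le_mul_left k hle
    refine ⟨h1, ?_⟩
    have h2 : 2 ∣ l - (3 * k + 2 * m + 1) := by omega
    obtain ⟨t, ht⟩ := h2
    refine ⟨t, ?_⟩
    rw [he, hl, ← Nat.mul_sub, ht]
    ring

/-- Let `m ≥ 0` be an integer. For every `n ≥ 1`, the coefficient of
`q^n` in `∑_{k≥1} (-1)^k q^{k(3k+1)+2mk}/(1-q^{2k})` equals
`#{(d₁,d₂) positive : d₁d₂ = n, d₁ odd, d₁ - 3d₂ ≥ 2m+1}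
- #{(d₁,d₂) positive : d₁d₂ = n, d₁ odd, d₂ - 3d₁ ≥ 2m+1}`. -/
theorem stmt13 (m : ℕ) (n : ℕ) (hn : 1 ≤ n) :
    (PowerSeries.coeff (R := ℤ) n) (seriesA m) =
      (Set.ncard {p : ℕ × ℕ | 0 < p.1 ∧ 0 < p.2 ∧ p.1 * p.2 = n ∧ Odd p.1 ∧
          2 * (m : ℤ) + 1 ≤ (p.1 : ℤ) - 3 * (p.2 : ℤ)} : ℤ)
      - (Set.ncard {p : ℕ × ℕ | 0 < p.1 ∧ 0 < p.2 ∧ p.1 * p.2 = n ∧ Odd p.1 ∧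
          2 * (m : ℤ) + 1 ≤ (p.2 : ℤ) - 3 * (p.1 : ℤ)} : ℤ) := by
  classical
  have hn0 : n ≠ 0 := by omega
  set P : ℕ → Prop := fun k => k ∣ n ∧ 3 * k + 2 * m + 1 ≤ n / k ∧ (n / k + k) % 2 = 1
    with hP
  -- the divisor-pair finsets
  set S1 : Finset (ℕ × ℕ) := n.divisorsAntidiagonal.filter
      (fun p => Odd p.1 ∧ 3 * p.2 + 2 * m + 1 ≤ p.1) with hS1
  set S2 : Finset (ℕ × ℕ) := n.divisorsAntidiagonal.filter
      (fun p => Odd p.1 ∧ 3 * p.1 + 2 * m + 1 ≤ p.2) with hS2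
  -- identify the ncard sets with S1, S2
  have hset1 : {p : ℕ × ℕ | 0 < p.1 ∧ 0 < p.2 ∧ p.1 * p.2 = n ∧ Odd p.1 ∧
      2 * (m : ℤ) + 1 ≤ (p.1 : ℤ) - 3 * (p.2 : ℤ)} = ↑S1 := by
    ext p
    simp only [Set.mem_setOf_eq, hS1, Finset.coe_filter, Set.mem_setOf_eq,
      Nat.mem_divisorsAntidiagonal]
    constructor
    · rintro ⟨h1, h2, h3, h4, h5⟩
      exact ⟨⟨h3, hn0⟩, h4, by omega⟩
    · rintro ⟨⟨h3, -⟩, h4, h5⟩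
      have hp1 : 0 < p.1 := by
        rcases Nat.eq_zero_or_pos p.1 with h | h
        · rw [h, zero_mul] at h3; omega
        · exact h
      have hp2 : 0 < p.2 := by
        rcases Nat.eq_zero_or_pos p.2 with h | h
        · rw [h, mul_zero] at h3; omega
        · exact h
      exact ⟨hp1, hp2, h3, h4, by omega⟩
  have hset2 : {p : ℕ × ℕ | 0 < p.1 ∧ 0 < p.2 ∧ p.1 * p.2 = n ∧ Odd p.1 ∧
      2 * (m : ℤ) + 1 ≤ (p.2 : ℤ) - 3 * (p.1 : ℤ)} = ↑S2 := by
    ext p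
    simp only [Set.mem_setOf_eq, hS2, Finset.coe_filter, Set.mem_setOf_eq,
      Nat.mem_divisorsAntidiagonal]
    constructor
    · rintro ⟨h1, h2, h3, h4, h5⟩
      exact ⟨⟨h3, hn0⟩, h4, by omega⟩
    · rintro ⟨⟨h3, -⟩, h4, h5⟩
      have hp1 : 0 < p.1 := by
        rcases Nat.eq_zero_or_pos p.1 with h | h
        · rw [h, zero_mul] at h3; omega
        · exact h
      have hp2 : 0 < p.2 := by
        rcases Nat.eq_zero_or_pos p.2 with h | h
        · rw [h, mul_zero] at h3; omega
        · exact h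
      exact ⟨hp1, hp2, h3, h4, by omega⟩
  rw [hset1, hset2, Set.ncard_coe_finset, Set.ncard_coe_finset]
  -- compute the coefficient as a difference of two cardinalities
  have hcoeff : (PowerSeries.coeff (R := ℤ) n) (seriesA m) =
      ((Finset.Icc 1 n).filter (fun k => P k ∧ k % 2 = 0)).card -
      ((Finset.Icc 1 n).filter (fun k => P k ∧ k % 2 = 1)).card := by
    rw [seriesA, PowerSeries.coeff_mk]
    have hterm : ∀ k ∈ Finset.Icc 1 n,
        (PowerSeries.coeff (R := ℤ) n)
          (PowerSeries.C (R := ℤ) ((-1) ^ k) * PowerSeries.X ^ (k * (3 * k + 1) + 2 * m * k) *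
            geomSer (2 * k)) =
        (if P k ∧ k % 2 = 0 then (1 : ℤ) else 0) -
        (if P k ∧ k % 2 = 1 then (1 : ℤ) else 0) := by
      intro k hk
      have hk1 : 1 ≤ k := (Finset.mem_Icc.mp hk).1
      rw [coeff_term, if_congr (cond_iff m n k hk1) rfl rfl]
      by_cases hp : P k
      · rw [if_pos hp]
        rcases Nat.even_or_odd k with he | ho
        · have h0 := Nat.even_iff.mp he
          rw [he.neg_one_pow, if_pos ⟨hp, h0⟩, if_neg (by rintro ⟨-, h⟩; omega)]
          ring
        · have h0 := Nat.odd_iff.mp ho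
          rw [ho.neg_one_pow, if_neg (by rintro ⟨-, h⟩; omega), if_pos ⟨hp, h0⟩]
          ring
      · rw [if_neg hp, if_neg (fun h => hp h.1), if_neg (fun h => hp h.1)]
        ring
    rw [Finset.sum_congr rfl hterm, Finset.sum_sub_distrib,
      Finset.sum_boole, Finset.sum_boole]
  rw [hcoeff]
  -- even/odd splits of S1, S2
  have hpart1 := Finset.card_filter_add_card_filter_not
    (s := S1) (fun p => p.2 % 2 = 0)
  have hpart2 := Finset.card_filter_add_card_filter_not
    (s := S2) (fun p => p.2 % 2 = 0)
  -- the even-k summands match S1 with p.2 even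
  have hA : ((Finset.Icc 1 n).filter (fun k => P k ∧ k % 2 = 0)).card =
      (S1.filter (fun p => p.2 % 2 = 0)).card := by
    refine Finset.card_bij' (fun k _ => (n / k, k)) (fun p _ => p.2) ?_ ?_ ?_ ?_
    · intro k hk
      simp only [Finset.mem_filter, Finset.mem_Icc, hP] at hk
      obtain ⟨⟨hk1, hkn⟩, ⟨hkdvd, hle, hpar⟩, hke⟩ := hk
      simp only [Finset.mem_filter, hS1, Nat.mem_divisorsAntidiagonal]
      refine ⟨⟨⟨Nat.div_mul_cancel hkdvd, hn0⟩, Nat.odd_iff.mpr (by omega), by omega⟩, hke⟩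
    · intro p hp
      simp only [Finset.mem_filter, hS1, Nat.mem_divisorsAntidiagonal] at hp
      obtain ⟨⟨⟨hmul, -⟩, hodd, hle⟩, hpe⟩ := hp
      have hp2 : 0 < p.2 := by
        rcases Nat.eq_zero_or_pos p.2 with h | h
        · rw [h, mul_zero] at hmul; omega
        · exact h
      have hdiv : n / p.2 = p.1 := by rw [← hmul, Nat.mul_div_cancel _ hp2]
      have hp2n : p.2 ≤ n := by
        rcases Nat.eq_zero_or_pos p.1 with h | h
        · rw [h, zero_mul] at hmul; omega
        · calc p.2 ≤ p.1 * p.2 := Nat.le_mul_of_pos_left _ h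
            _ = n := hmul
      simp only [Finset.mem_filter, Finset.mem_Icc, hP]
      have hodd' := Nat.odd_iff.mp hodd
      exact ⟨⟨hp2, hp2n⟩, ⟨⟨p.1, by rw [← hmul, mul_comm]⟩, by rw [hdiv]; omega, by rw [hdiv]; omega⟩, hpe⟩
    · intro k hk; rfl
    · intro p hp
      simp only [Finset.mem_filter, hS1, Nat.mem_divisorsAntidiagonal] at hp
      obtain ⟨⟨⟨hmul, -⟩, hodd, hle⟩, hpe⟩ := hp
      have hp2 : 0 < p.2 := by
        rcases Nat.eq_zero_or_pos p.2 with h | h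
        · rw [h, mul_zero] at hmul; omega
        · exact h
      have hdiv : n / p.2 = p.1 := by rw [← hmul, Nat.mul_div_cancel _ hp2]
      exact Prod.ext hdiv rfl
  -- the odd-k summands match S2 with p.2 even
  have hB : ((Finset.Icc 1 n).filter (fun k => P k ∧ k % 2 = 1)).card =
      (S2.filter (fun p => p.2 % 2 = 0)).card := by
    refine Finset.card_bij' (fun k _ => (k, n / k)) (fun p _ => p.1) ?_ ?_ ?_ ?_
    · intro k hk
      simp only [Finset.mem_filter, Finset.mem_Icc, hP] at hk
      obtain ⟨⟨hk1, hkn⟩, ⟨hkdvd, hle, hpar⟩, hko⟩ := hk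
      simp only [Finset.mem_filter, hS2, Nat.mem_divisorsAntidiagonal]
      refine ⟨⟨⟨Nat.mul_div_cancel' hkdvd, hn0⟩, Nat.odd_iff.mpr hko, by omega⟩, by omega⟩
    · intro p hp
      simp only [Finset.mem_filter, hS2, Nat.mem_divisorsAntidiagonal] at hp
      obtain ⟨⟨⟨hmul, -⟩, hodd, hle⟩, hpe⟩ := hp
      have hp1 : 0 < p.1 := by
        rcases Nat.eq_zero_or_pos p.1 with h | h
        · rw [h, zero_mul] at hmul; omega
        · exact h
      have hdiv : n / p.1 = p.2 := by rw [← hmul, Nat.mul_div_cancel_left _ hp1]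
      have hp1n : p.1 ≤ n := by
        rcases Nat.eq_zero_or_pos p.2 with h | h
        · rw [h, mul_zero] at hmul; omega
        · calc p.1 ≤ p.1 * p.2 := Nat.le_mul_of_pos_right _ h
            _ = n := hmul
      simp only [Finset.mem_filter, Finset.mem_Icc, hP]
      have hodd' := Nat.odd_iff.mp hodd
      exact ⟨⟨hp1, hp1n⟩, ⟨⟨p.2, hmul.symm⟩, by rw [hdiv]; omega, by rw [hdiv]; omega⟩, hodd'⟩
    · intro k hk; rfl
    · intro p hp
      simp only [Finset.mem_filter, hS2, Nat.mem_divisorsAntidiagonal] at hp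
      obtain ⟨⟨⟨hmul, -⟩, hodd, hle⟩, hpe⟩ := hp
      have hp1 : 0 < p.1 := by
        rcases Nat.eq_zero_or_pos p.1 with h | h
        · rw [h, zero_mul] at hmul; omega
        · exact h
      have hdiv : n / p.1 = p.2 := by rw [← hmul, Nat.mul_div_cancel_left _ hp1]
      exact Prod.ext rfl hdiv
  -- both-odd pairs cancel: swap bijection
  have hswap : (S1.filter (fun p => ¬ p.2 % 2 = 0)).card =
      (S2.filter (fun p => ¬ p.2 % 2 = 0)).card := by
    refine Finset.card_bij' (fun p _ => (p.2, p.1)) (fun p _ => (p.2, p.1)) ?_ ?_ ?_ ?_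
    · intro p hp
      simp only [Finset.mem_filter, hS1, Nat.mem_divisorsAntidiagonal] at hp
      obtain ⟨⟨⟨hmul, -⟩, hodd, hle⟩, hpo⟩ := hp
      simp only [Finset.mem_filter, hS2, Nat.mem_divisorsAntidiagonal]
      have hodd' := Nat.odd_iff.mp hodd
      exact ⟨⟨⟨by rw [mul_comm]; exact hmul, hn0⟩, Nat.odd_iff.mpr (by omega), hle⟩, by omega⟩
    · intro p hp
      simp only [Finset.mem_filter, hS2, Nat.mem_divisorsAntidiagonal] at hp
      obtain ⟨⟨⟨hmul, -⟩, hodd, hle⟩, hpo⟩ := hp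
      simp only [Finset.mem_filter, hS1, Nat.mem_divisorsAntidiagonal]
      have hodd' := Nat.odd_iff.mp hodd
      exact ⟨⟨⟨by rw [mul_comm]; exact hmul, hn0⟩, Nat.odd_iff.mpr (by omega), hle⟩, by omega⟩
    · intro p hp; rfl
    · intro p hp; rfl
  rw [hA, hB]
  omega
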